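/- Under the same hypotheses, the partial derivative of t with respect to the direction v at (θ₀,c₀,v₀) equals -t₀·∇ₓf(x₀;θ₀) / ⟨∇ₓf(x₀;θ₀), v₀⟩. -/

import Mathlib

open scoped RealInnerProductSpace

noncomputable section

/-- Implicit differentiation of the ray-surface intersection parameter `t` with
respect to the ray direction `v`. -/
theorem gradient_t_wrt_v {m : ℕ}
    (f : EuclideanSpace ℝ (Fin 3) → EuclideanSpace ℝ (Fin m) → ℝ)
    (t : EuclideanSpace ℝ (Fin m) → EuclideanSpace ℝ (Fin 3) → EuclideanSpace ℝ (Fin 3) → ℝ)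
    (θ₀ : EuclideanSpace ℝ (Fin m)) (c₀ v₀ : EuclideanSpace ℝ (Fin 3))
    (hf : ContDiff ℝ 1 (fun p : EuclideanSpace ℝ (Fin 3) × EuclideanSpace ℝ (Fin m) => f p.1 p.2))
    (ht : ∀ᶠ p : EuclideanSpace ℝ (Fin m) × EuclideanSpace ℝ (Fin 3) × EuclideanSpace ℝ (Fin 3)
        in nhds (θ₀, c₀, v₀), f (p.2.1 + t p.1 p.2.1 p.2.2 • p.2.2) p.1 = 0)
    (ht' : DifferentiableAt ℝ
      (fun p : EuclideanSpace ℝ (Fin m) × EuclideanSpace ℝ (Fin 3) × EuclideanSpace ℝ (Fin 3) =>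
        t p.1 p.2.1 p.2.2) (θ₀, c₀, v₀))
    (t₀ : ℝ) (ht₀ : t₀ = t θ₀ c₀ v₀)
    (x₀ : EuclideanSpace ℝ (Fin 3)) (hx₀ : x₀ = c₀ + t₀ • v₀)
    (g : EuclideanSpace ℝ (Fin 3)) (hgdef : g = gradient (fun x => f x θ₀) x₀)
    (hg : ⟪g, v₀⟫ ≠ 0) :
    gradient (fun v => t θ₀ c₀ v) v₀ = (-(t₀ / ⟪g, v₀⟫)) • g := by
  -- differentiability of the v-slice of t
  have hmap : DifferentiableAt ℝ (fun v : EuclideanSpace ℝ (Fin 3) => ((θ₀, c₀, v) : EuclideanSpace ℝ (Fin m) × EuclideanSpace ℝ (Fin 3) × EuclideanSpace ℝ (Fin 3))) v₀ :=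
    DifferentiableAt.prodMk (differentiableAt_const _) (DifferentiableAt.prodMk (differentiableAt_const _) differentiableAt_id)
  have hφ : DifferentiableAt ℝ (fun v => t θ₀ c₀ v) v₀ := by have := ht'.comp v₀ hmap; exact this
  set L₀ := fderiv ℝ (fun v => t θ₀ c₀ v) v₀ with hL₀
  -- differentiability of f
  have hfd : DifferentiableAt ℝ (fun p : EuclideanSpace ℝ (Fin 3) × EuclideanSpace ℝ (Fin m) => f p.1 p.2) (x₀, θ₀) :=
    (hf.differentiable one_ne_zero).differentiableAt
  set Df := fderiv ℝ (fun p : EuclideanSpace ℝ (Fin 3) × EuclideanSpace ℝ (Fin m) => f p.1 p.2) (x₀, θ₀) with hDf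
  -- the slice x ↦ f x θ₀
  have hslice : HasFDerivAt (fun x : EuclideanSpace ℝ (Fin 3) => f x θ₀)
      (Df.comp ((ContinuousLinearMap.id ℝ (EuclideanSpace ℝ (Fin 3))).prod 0)) x₀ := by
    have h1 : HasFDerivAt (fun x : EuclideanSpace ℝ (Fin 3) => ((x, θ₀) : EuclideanSpace ℝ (Fin 3) × EuclideanSpace ℝ (Fin m)))
        ((ContinuousLinearMap.id ℝ (EuclideanSpace ℝ (Fin 3))).prod 0) x₀ :=
      HasFDerivAt.prodMk (hasFDerivAt_id x₀) (hasFDerivAt_const θ₀ x₀)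
    exact (hfd.hasFDerivAt).comp x₀ h1
  have hgi : ∀ u : EuclideanSpace ℝ (Fin 3), ⟪g, u⟫ = Df (u, 0) := by
    intro u
    have hgrad : gradient (fun x : EuclideanSpace ℝ (Fin 3) => f x θ₀) x₀ =
        (InnerProductSpace.toDual ℝ (EuclideanSpace ℝ (Fin 3))).symm (Df.comp ((ContinuousLinearMap.id ℝ (EuclideanSpace ℝ (Fin 3))).prod 0)) :=
      (hasFDerivAt_iff_hasGradientAt.mp hslice).gradient
    rw [hgdef, hgrad, InnerProductSpace.toDual_symm_apply]
    simp
  -- derivative of v ↦ c₀ + t θ₀ c₀ v • v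
  have hinner : HasFDerivAt (fun v : EuclideanSpace ℝ (Fin 3) => c₀ + t θ₀ c₀ v • v)
      (t₀ • ContinuousLinearMap.id ℝ (EuclideanSpace ℝ (Fin 3)) + L₀.smulRight v₀) v₀ := by
    have h2 : HasFDerivAt (fun v : EuclideanSpace ℝ (Fin 3) => t θ₀ c₀ v • v)
        (t θ₀ c₀ v₀ • ContinuousLinearMap.id ℝ (EuclideanSpace ℝ (Fin 3)) + L₀.smulRight v₀) v₀ :=
      (hφ.hasFDerivAt).smul (hasFDerivAt_id v₀)
    rw [← ht₀] at h2
    exact h2.const_add c₀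
  -- the composed map F is eventually 0
  have hF0 : (fun v : EuclideanSpace ℝ (Fin 3) => f (c₀ + t θ₀ c₀ v • v) θ₀) =ᶠ[nhds v₀] fun _ => (0 : ℝ) := by
    have hc : ContinuousAt (fun v : EuclideanSpace ℝ (Fin 3) => ((θ₀, c₀, v) : EuclideanSpace ℝ (Fin m) × EuclideanSpace ℝ (Fin 3) × EuclideanSpace ℝ (Fin 3))) v₀ := by fun_prop
    exact (Filter.Tendsto.eventually hc ht : _)
  -- chain rule for F
  set K : EuclideanSpace ℝ (Fin 3) →L[ℝ] EuclideanSpace ℝ (Fin 3) × EuclideanSpace ℝ (Fin m) :=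
    (t₀ • ContinuousLinearMap.id ℝ (EuclideanSpace ℝ (Fin 3)) + L₀.smulRight v₀).prod 0 with hK
  have hx₀' : c₀ + t θ₀ c₀ v₀ • v₀ = x₀ := by rw [hx₀, ht₀]
  have hFder : HasFDerivAt (fun v : EuclideanSpace ℝ (Fin 3) => f (c₀ + t θ₀ c₀ v • v) θ₀) (Df.comp K) v₀ := by
    have hpair : HasFDerivAt (fun v : EuclideanSpace ℝ (Fin 3) => ((c₀ + t θ₀ c₀ v • v, θ₀) : EuclideanSpace ℝ (Fin 3) × EuclideanSpace ℝ (Fin m))) K v₀ :=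
      HasFDerivAt.prodMk hinner (hasFDerivAt_const θ₀ v₀)
    have hfdx : HasFDerivAt (fun p : EuclideanSpace ℝ (Fin 3) × EuclideanSpace ℝ (Fin m) => f p.1 p.2)
        Df (c₀ + t θ₀ c₀ v₀ • v₀, θ₀) := by rw [hx₀']; exact hfd.hasFDerivAt
    exact hfdx.comp v₀ hpair
  have hzero : Df.comp K = 0 := by
    have h0 : HasFDerivAt (fun v : EuclideanSpace ℝ (Fin 3) => f (c₀ + t θ₀ c₀ v • v) θ₀)
        (0 : EuclideanSpace ℝ (Fin 3) →L[ℝ] ℝ) v₀ :=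
      HasFDerivAt.congr_of_eventuallyEq (hasFDerivAt_const (0 : ℝ) v₀) hF0
    exact hFder.unique h0
  -- extract the pointwise equation
  have key : ∀ w : EuclideanSpace ℝ (Fin 3), t₀ * ⟪g, w⟫ + L₀ w * ⟪g, v₀⟫ = 0 := by
    intro w
    have h1 : Df (K w) = 0 := by
      have := congrArg (fun (T : EuclideanSpace ℝ (Fin 3) →L[ℝ] ℝ) => T w) hzero
      simpa using this
    have hKw : K w = (t₀ • w + L₀ w • v₀, 0) := by
      simp [hK]
    rw [hKw] at h1
    have hsplit : ((t₀ • w + L₀ w • v₀, (0 : EuclideanSpace ℝ (Fin m))) : EuclideanSpace ℝ (Fin 3) × EuclideanSpace ℝ (Fin m))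
        = t₀ • ((w, 0) : EuclideanSpace ℝ (Fin 3) × EuclideanSpace ℝ (Fin m)) + L₀ w • ((v₀, 0) : EuclideanSpace ℝ (Fin 3) × EuclideanSpace ℝ (Fin m)) := by
      simp [Prod.ext_iff]
    rw [hsplit, map_add, map_smul, map_smul] at h1
    rw [hgi w, hgi v₀]
    simpa [smul_eq_mul, mul_comm] using h1
  -- conclude
  have hL : L₀ = InnerProductSpace.toDual ℝ (EuclideanSpace ℝ (Fin 3)) ((-(t₀ / ⟪g, v₀⟫)) • g) := by
    ext w
    have : L₀ w = -(t₀ * ⟪g, w⟫) / ⟪g, v₀⟫ := by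
      rw [eq_div_iff hg]; linarith [key w]
    rw [this, InnerProductSpace.toDual_apply_apply, real_inner_smul_left]
    field_simp
  have : HasGradientAt (fun v => t θ₀ c₀ v) ((-(t₀ / ⟪g, v₀⟫)) • g) v₀ := by
    rw [hasGradientAt_iff_hasFDerivAt, ← hL]
    exact hφ.hasFDerivAt
  exact this.gradient
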